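/- Let S ∈ Σ^m, let R := subcl(S) with transition function δ_R(r,σ) := (the longest suffix of rσ lying in subcl(S)), and let D' be the reduced DAA built from R, δ_R and the BMH cost and shift functions (f_BMH, g_BMH). Then for every n ≥ 0 and every text T ∈ Σ^n, value_{D'}(T) equals the total cost of the window-based algorithm (f_BMH, g_BMH) on T (the number of text character accesses performed by the Boyer–Moore–Horspool algorithm when searching T for S), and D' has at most (m(m+1)/2 + 1)(m+1) states. -/

import Mathlib

/-- The longest suffix of `a` satisfying `p` (default `[]` if no suffix satisfies `p`). -/
def longestSuffixP {A : Type*} (p : List A → Prop) [DecidablePred p] (a : List A) : List A :=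
  (a.tails.filter fun t => decide (p t)).headD []

/-- Run of a DAA with additive natural-number values: from a state/value pair,
read the text character by character; on entering a state, add its emission. -/
def daaRun {A Q : Type*} (step : Q → A → Q) (emit : Q → ℕ) : Q × ℕ → List A → Q × ℕ
  | s, [] => s
  | (q, v), σ :: x => daaRun step emit (step q σ, v + emit (step q σ)) x

/-- Transition of the (full) DAA encoding a window-based algorithm with shift `g`:
states are pairs (window, count-down `k`); on reading `σ` in state `(w,k)` move to
`(w₁…w_{m-1}σ, k-1)` if `k > 0` and to `(w₁…w_{m-1}σ, g(w)-1)` if `k = 0`. -/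
def fullStep {A : Type*} (g : List A → ℕ) : (List A × ℕ) → A → (List A × ℕ) :=
  fun s σ => (s.1.tail ++ [σ], if 0 < s.2 then s.2 - 1 else g s.1 - 1)

/-- Emission of the (full) DAA encoding a window-based algorithm with cost `f`:
on entering `(w',k')`, add `f(w')` if `k' = 0` and `0` otherwise. -/
def fullEmit {A : Type*} (f : List A → ℕ) : (List A × ℕ) → ℕ :=
  fun s => if s.2 = 0 then f s.1 else 0

/-- `value_D(T)` for the DAA `D` encoding `(f,g)` with start state `(S,m)` and start value `0`. -/
def valueD {A : Type*} (f g : List A → ℕ) (S : List A) (m : ℕ) (T : List A) : ℕ :=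
  (daaRun (fullStep g) (fullEmit f) ((S, m), 0) T).2

/-- Total cost of the window-based algorithm `(f,g)` (auxiliary, fuelled version):
from window position `p`, as long as `p + m ≤ |T|`, pay `f` on the current window
`t_p … t_{p+m-1}` and shift by `g` of it. (Since shifts are ≥ 1, fuel `|T| + 1`
suffices to visit all window positions.) -/
def totalCostAux {A : Type*} (f g : List A → ℕ) (m : ℕ) (T : List A) : ℕ → ℕ → ℕ
  | 0, _ => 0
  | fuel + 1, p =>
    if p + m ≤ T.length then
      f ((T.drop p).take m) + totalCostAux f g m T fuel (p + g ((T.drop p).take m))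
    else 0

/-- Total cost (number of text character accesses) of the window-based pattern matching
algorithm specified by cost `f` and shift `g` on text `T` (window length `m`),
starting at window position `0`. -/
def totalCost {A : Type*} (f g : List A → ℕ) (m : ℕ) (T : List A) : ℕ :=
  totalCostAux f g m T (T.length + 1) 0

/-- Transition of the reduced DAA built from a representatives transition `δR` and lifted
shift `gR`: on reading `σ` in state `(r,k)` move to `(δR(r,σ), k-1)` if `k > 0` and to
`(δR(r,σ), gR(r)-1)` if `k = 0`. -/
def redStep {A : Type*} (δR : List A → A → List A) (gR : List A → ℕ) :
    (List A × ℕ) → A → (List A × ℕ) :=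
  fun s σ => (δR s.1 σ, if 0 < s.2 then s.2 - 1 else gR s.1 - 1)

/-- Emission of the reduced DAA with lifted cost `fR`: on entering `(r',k')`, add
`fR(r')` if `k' = 0` and `0` otherwise. -/
def redEmit {A : Type*} (fR : List A → ℕ) : (List A × ℕ) → ℕ :=
  fun s => if s.2 = 0 then fR s.1 else 0

/-- `rep_{subcl(S)}(a)`: the longest suffix of `a` lying in `subcl(S)`, the set of all
contiguous substrings of `S` (including the empty string), i.e. the longest suffix of `a`
that is an infix of `S`. -/
def repSub {A : Type*} [DecidableEq A] (S : List A) (a : List A) : List A :=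
  longestSuffixP (· <:+: S) a

open scoped Classical in
/-- `f_BM(w)` (= `f_BMH(w)`): the cost of window `w`, i.e. `m` if `w = S`, and otherwise the
least `i ∈ {1,…,m}` with `w_{m−i} ≠ s_{m−i}` (0-indexed; comparison from the right). -/
noncomputable def fBM {A : Type*} [Inhabited A] [DecidableEq A]
    (S : List A) (m : ℕ) (w : List A) : ℕ :=
  if w = S then m
  else sInf {i : ℕ | 1 ≤ i ∧ i ≤ m ∧ w.getI (m - i) ≠ S.getI (m - i)}

open scoped Classical in
/-- The bad-character rule `bc^S(w,i)`: `m−i+1` if `w_{m−i} ∉ {s_0,…,s_{m−i−1}}`,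
and otherwise the least `k ∈ {1,…,m−i}` with `w_{m−i} = s_{m−i−k}`. -/
noncomputable def bcBM {A : Type*} [Inhabited A] [DecidableEq A]
    (S : List A) (m : ℕ) (w : List A) (i : ℕ) : ℕ :=
  if ∃ j : ℕ, j + i < m ∧ S.getI j = w.getI (m - i) then
    sInf {k : ℕ | 1 ≤ k ∧ k ≤ m - i ∧ w.getI (m - i) = S.getI (m - i - k)}
  else m - i + 1

/-- `𝒮^S(w,i)`: the set of `k ∈ {0,…,m−i}` with `s_k…s_{k+i−2} = w_{m−i+1}…w_{m−1}` and
`s_{k−1} ≠ w_{m−i}` whenever `k ≥ 1`. -/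
def SBM {A : Type*} [Inhabited A] (S : List A) (m : ℕ) (w : List A) (i : ℕ) : Set ℕ :=
  {k : ℕ | k + i ≤ m ∧ (∀ j : ℕ, j + 1 < i → S.getI (k + j) = w.getI (m - i + 1 + j)) ∧
    (1 ≤ k → S.getI (k - 1) ≠ w.getI (m - i))}

/-- `𝒦^S(w,i)`: the set of `k ∈ {0,…,i−2}` with `s_0…s_k = w_{m−k−1}…w_{m−1}`. -/
def KBM {A : Type*} [Inhabited A] (S : List A) (m : ℕ) (w : List A) (i : ℕ) : Set ℕ :=
  {k : ℕ | k + 2 ≤ i ∧ ∀ j : ℕ, j ≤ k → S.getI j = w.getI (m - k - 1 + j)}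

open scoped Classical in
/-- The good-suffix rule `gs^S(w,i)`. -/
noncomputable def gsBM {A : Type*} [Inhabited A] (S : List A) (m : ℕ) (w : List A) (i : ℕ) : ℕ :=
  if (SBM S m w i).Nonempty then m - i - sSup (SBM S m w i) + 1
  else if (KBM S m w i).Nonempty then m - sSup (KBM S m w i) - 1
  else m

/-- The Boyer–Moore shift `g_BM(w) = max{bc^S(w, f_BM(w)), gs^S(w, f_BM(w))}`. -/
noncomputable def gBM {A : Type*} [Inhabited A] [DecidableEq A]
    (S : List A) (m : ℕ) (w : List A) : ℕ :=
  max (bcBM S m w (fBM S m w)) (gsBM S m w (fBM S m w))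

/-- The Boyer–Moore–Horspool cost `f_BMH = f_BM`. -/
noncomputable def fBMH {A : Type*} [Inhabited A] [DecidableEq A]
    (S : List A) (m : ℕ) (w : List A) : ℕ :=
  fBM S m w

/-- The Boyer–Moore–Horspool shift `g_BMH(w) = bc^S(w,1)`. -/
noncomputable def gBMH {A : Type*} [Inhabited A] [DecidableEq A]
    (S : List A) (m : ℕ) (w : List A) : ℕ :=
  bcBM S m w 1


/-! ### Auxiliary lemmas -/

section LSP
variable {A : Type*} (p : List A → Prop) [DecidablePred p]

lemma lsp_nil : longestSuffixP p [] = [] := by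
  unfold longestSuffixP
  simp only [List.tails]
  by_cases h : p [] <;> simp [h]

lemma lsp_cons (x : A) (a : List A) :
    longestSuffixP p (x :: a) = if p (x :: a) then x :: a else longestSuffixP p a := by
  unfold longestSuffixP
  rw [List.tails_cons, List.filter_cons]
  by_cases h : p (x :: a) <;> simp [h]

lemma lsp_suffix (a : List A) : longestSuffixP p a <:+ a := by
  induction a with
  | nil => rw [lsp_nil]
  | cons x a ih =>
    rw [lsp_cons]
    by_cases h : p (x :: a)
    · simp [h]
    · simp only [h, if_false]
      exact ih.trans (List.suffix_cons x a)

lemma lsp_prop (h : p []) (a : List A) : p (longestSuffixP p a) := by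
  induction a with
  | nil => rw [lsp_nil]; exact h
  | cons x a ih =>
    rw [lsp_cons]
    by_cases hx : p (x :: a) <;> simp [hx, ih]

lemma lsp_max (a t : List A) (ht : t <:+ a) (hp : p t) : t <:+ longestSuffixP p a := by
  induction a with
  | nil => rw [List.suffix_nil] at ht; subst ht; rw [lsp_nil]
  | cons x a ih =>
    rw [lsp_cons]
    by_cases hx : p (x :: a)
    · simpa [hx] using ht
    · simp only [hx, if_false]
      rcases List.suffix_cons_iff.1 ht with rfl | ht'
      · exact absurd hp hx
      · exact ih ht'
end LSP

section Rep
set_option linter.unusedSectionVars false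
variable {A : Type*} [DecidableEq A] (S : List A)

lemma suffix_antisymm {l₁ l₂ : List A} (h : l₁ <:+ l₂) (h' : l₂ <:+ l₁) : l₁ = l₂ :=
  h.sublist.eq_of_length (Nat.le_antisymm h.length_le h'.length_le)

lemma suffix_append_suffix {l₁ l₂ : List A} (h : l₁ <:+ l₂) (b : List A) :
    l₁ ++ b <:+ l₂ ++ b := by
  obtain ⟨u, hu⟩ := h
  exact ⟨u, by rw [← List.append_assoc, hu]⟩

lemma suffix_of_suffix_le {l₁ l₂ l : List A} (h₁ : l₁ <:+ l) (h₂ : l₂ <:+ l)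
    (h : l₁.length ≤ l₂.length) : l₁ <:+ l₂ := by
  obtain ⟨u, rfl⟩ := h₂
  rw [List.suffix_iff_eq_drop] at h₁
  have hlen : (u ++ l₂).length - l₁.length = u.length + (l₂.length - l₁.length) := by
    simp only [List.length_append]; omega
  rw [hlen, List.drop_length_add_append] at h₁
  exact h₁ ▸ List.drop_suffix _ _

lemma repSub_suffix (a : List A) : repSub S a <:+ a := lsp_suffix _ a

lemma repSub_infix (a : List A) : repSub S a <:+: S := by
  unfold repSub
  exact lsp_prop (· <:+: S) List.nil_infix a

lemma repSub_max {a t : List A} (ht : t <:+ a) (hp : t <:+: S) : t <:+ repSub S a := by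
  unfold repSub
  exact lsp_max (· <:+: S) a t ht hp

lemma repSub_self : repSub S S = S :=
  suffix_antisymm (repSub_suffix S S) (repSub_max S List.suffix_rfl List.infix_rfl)

lemma repSub_append (a b : List A) : repSub S (a ++ b) = repSub S (repSub S a ++ b) := by
  apply suffix_antisymm
  · apply repSub_max
    · have hs : repSub S (a ++ b) <:+ a ++ b := repSub_suffix S _
      by_cases hlen : (repSub S (a ++ b)).length ≤ b.length
      · exact (suffix_of_suffix_le hs (List.suffix_append a b) hlen).trans
          (List.suffix_append (repSub S a) b)
      · rw [List.suffix_iff_eq_drop] at hs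
        have hl : (repSub S (a ++ b)).length ≤ a.length + b.length := by
          have := (repSub_suffix S (a ++ b)).length_le
          simpa using this
        set i := (a ++ b).length - (repSub S (a ++ b)).length with hi
        have hia : i ≤ a.length := by simp only [hi, List.length_append]; omega
        have hdec : repSub S (a ++ b) = a.drop i ++ b := by
          rw [hs, List.drop_append, Nat.sub_eq_zero_of_le hia, List.drop_zero]
        have hinf : a.drop i <:+: S :=
          List.IsInfix.trans ⟨[], b, by simp [← hdec]⟩ (repSub_infix S (a ++ b))
        obtain ⟨u, hu⟩ := repSub_max S (List.drop_suffix i a) hinf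
        rw [hdec]
        exact ⟨u, by rw [← List.append_assoc, hu]⟩
    · exact repSub_infix S _
  · apply repSub_max
    · exact (repSub_suffix S _).trans (suffix_append_suffix (repSub_suffix S a) b)
    · exact repSub_infix S _

lemma repSub_window {w c : List A} (hw : w <:+ c) (hl : w.length = S.length) :
    repSub S c = repSub S w := by
  apply suffix_antisymm
  · apply repSub_max
    · exact suffix_of_suffix_le (repSub_suffix S c) hw
        (by rw [hl]; exact (repSub_infix S c).length_le)
    · exact repSub_infix S c
  · exact repSub_max S ((repSub_suffix S w).trans hw) (repSub_infix S w)
end Rep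

section Sim
set_option linter.unusedSectionVars false
variable {A : Type*} [DecidableEq A] (S : List A) (fR gR : List A → ℕ)

@[simp] lemma daaRun_nil {Q : Type*} (step : Q → A → Q) (emit : Q → ℕ) (s : Q × ℕ) :
    daaRun step emit s [] = s := rfl

@[simp] lemma daaRun_cons {Q : Type*} (step : Q → A → Q) (emit : Q → ℕ) (q : Q) (v : ℕ)
    (σ : A) (x : List A) :
    daaRun step emit (q, v) (σ :: x) = daaRun step emit (step q σ, v + emit (step q σ)) x := rfl

lemma redStep_eval (c : List A) (k : ℕ) (σ : A) :
    redStep (fun r σ => repSub S (r ++ [σ])) gR (repSub S c, k) σ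
      = (repSub S (c ++ [σ]), if 0 < k then k - 1 else gR (repSub S c) - 1) := by
  simp only [redStep]
  rw [← repSub_append]

lemma countdown : ∀ (k : ℕ) (rest c : List A) (v : ℕ), 1 ≤ k → k ≤ rest.length →
    daaRun (redStep (fun r σ => repSub S (r ++ [σ])) gR) (redEmit fR) ((repSub S c, k), v) rest
      = daaRun (redStep (fun r σ => repSub S (r ++ [σ])) gR) (redEmit fR)
          ((repSub S (c ++ rest.take k), 0),
            v + fR (repSub S (c ++ rest.take k))) (rest.drop k) := by
  intro k
  induction k with
  | zero => intro rest c v h; omega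
  | succ k ih =>
    intro rest c v _ hlen
    match rest with
    | [] => simp at hlen
    | σ :: rest =>
      rw [daaRun_cons, redStep_eval]
      simp only [Nat.succ_sub_one, if_pos (Nat.succ_pos k)]
      rcases Nat.eq_zero_or_pos k with hk | hk
      · subst hk
        simp [redEmit, List.take_succ_cons]
      · have hemit : redEmit fR (repSub S (c ++ [σ]), k) = 0 := by
          simp only [redEmit]
          rw [if_neg (by omega)]
        rw [hemit, Nat.add_zero, ih rest (c ++ [σ]) v hk (by simpa using hlen)]
        simp [List.append_assoc]

lemma overflow : ∀ (rest : List A) (k : ℕ) (c : List A) (v : ℕ), rest.length < k →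
    (daaRun (redStep (fun r σ => repSub S (r ++ [σ])) gR) (redEmit fR)
      ((repSub S c, k), v) rest).2 = v := by
  intro rest
  induction rest with
  | nil => intro k c v h; rfl
  | cons σ rest ih =>
    intro k c v h
    simp only [List.length_cons] at h
    rw [daaRun_cons, redStep_eval, if_pos (by omega : 0 < k)]
    have hemit : redEmit fR (repSub S (c ++ [σ]), k - 1) = 0 := by
      simp only [redEmit]
      rw [if_neg (by omega)]
    rw [hemit, Nat.add_zero]
    exact ih (k - 1) (c ++ [σ]) v (by omega)

lemma zero_run (c : List A) (v : ℕ) (rest : List A) (hg : 0 < gR (repSub S c)) :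
    (daaRun (redStep (fun r σ => repSub S (r ++ [σ])) gR) (redEmit fR)
        ((repSub S c, 0), v) rest).2
      = (daaRun (redStep (fun r σ => repSub S (r ++ [σ])) gR) (redEmit fR)
          ((repSub S c, gR (repSub S c)), v) rest).2 := by
  cases rest with
  | nil => rfl
  | cons σ rest =>
    rw [daaRun_cons, daaRun_cons, redStep_eval, redStep_eval, if_pos hg,
      if_neg (lt_irrefl 0)]

lemma gBMH_pos {A : Type*} [Inhabited A] [DecidableEq A] (S : List A) (m : ℕ) (hm : 1 ≤ m)
    (w : List A) : 1 ≤ gBMH S m w := by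
  unfold gBMH bcBM
  split_ifs with h
  · obtain ⟨j, hj, hSj⟩ := h
    have hmem : (m - 1 - j) ∈
        {k : ℕ | 1 ≤ k ∧ k ≤ m - 1 ∧ w.getI (m - 1) = S.getI (m - 1 - k)} := by
      refine ⟨by omega, by omega, ?_⟩
      have hjj : m - 1 - (m - 1 - j) = j := by omega
      rw [hjj]
      exact hSj.symm
    exact (Nat.sInf_mem ⟨_, hmem⟩).1
  · omega

lemma loop {A : Type*} [Inhabited A] [DecidableEq A] (m : ℕ) (hm : 1 ≤ m)
    (S : List A) (hS : S.length = m) (fR gR : List A → ℕ)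
    (hfR : ∀ a : List A, a.length = m → fR (repSub S a) = fBMH S m a)
    (hgR : ∀ a : List A, a.length = m → gR (repSub S a) = gBMH S m a)
    (T : List A) :
    ∀ (fuel p q v k : ℕ), 1 ≤ k → q + k = p + m → q ≤ T.length →
      T.length + 1 ≤ p + fuel →
      (daaRun (redStep (fun r σ => repSub S (r ++ [σ])) gR) (redEmit fR)
          ((repSub S (S ++ T.take q), k), v) (T.drop q)).2
        = v + totalCostAux (fBMH S m) (gBMH S m) m T fuel p := by
  intro fuel
  induction fuel with
  | zero =>
    intro p q v k hk hqk hq hf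
    rw [totalCostAux, Nat.add_zero]
    apply overflow
    rw [List.length_drop]
    omega
  | succ fuel ih =>
    intro p q v k hk hqk hq hf
    rw [totalCostAux]
    by_cases hp : p + m ≤ T.length
    · rw [if_pos hp]
      have hk_le : k ≤ (T.drop q).length := by rw [List.length_drop]; omega
      rw [countdown S fR gR k (T.drop q) (S ++ T.take q) v hk hk_le]
      have hc : (S ++ T.take q) ++ (T.drop q).take k = S ++ T.take (p + m) := by
        rw [List.append_assoc]
        congr 1
        rw [← hqk, List.take_add]
      rw [hc, List.drop_drop, hqk]
      set w := (T.drop p).take m with hw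
      have hwlen : w.length = m := by
        rw [hw, List.length_take, List.length_drop]
        omega
      have hwsuffix : w <:+ S ++ T.take (p + m) := by
        have htk : T.take (p + m) = T.take p ++ w := by
          rw [hw, List.take_add]
        rw [htk, ← List.append_assoc]
        exact List.suffix_append _ w
      have hrep : repSub S (S ++ T.take (p + m)) = repSub S w :=
        repSub_window S hwsuffix (by rw [hwlen, hS])
      have hgr : 0 < gR (repSub S (S ++ T.take (p + m))) := by
        rw [hrep, hgR w hwlen]
        exact gBMH_pos S m hm w
      rw [zero_run S fR gR _ _ _ hgr]
      have hgval : gR (repSub S (S ++ T.take (p + m))) = gBMH S m w := by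
        rw [hrep, hgR w hwlen]
      rw [hgval]
      have hfval : fR (repSub S (S ++ T.take (p + m))) = fBMH S m w := by
        rw [hrep, hfR w hwlen]
      rw [hfval]
      have hrec := ih (p + gBMH S m w) (p + m) (v + fBMH S m w) (gBMH S m w)
        (gBMH_pos S m hm w) (by omega) hp
        (by have := gBMH_pos S m hm w; omega)
      rw [hrec]
      omega
    · rw [if_neg hp, Nat.add_zero]
      apply overflow
      rw [List.length_drop]
      omega
end Sim

/-- Let `S ∈ Σ^m`, let `R := subcl(S)` with transition function
`δ_R(r,σ) := `(the longest suffix of `rσ` lying in `subcl(S)`), and let `D'` be the reduced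
DAA built from `R`, `δ_R` and the BMH cost and shift functions `(f_BMH, g_BMH)` (via any
liftings `fR`, `gR` to representatives — the values on representatives not of the form
`rep_{subcl(S)}(a)` are immaterial). Then for every text `T ∈ Σ*`, `value_{D'}(T)` equals
the total cost of the window-based algorithm `(f_BMH, g_BMH)` on `T` (the number of text
character accesses performed by the Boyer–Moore–Horspool algorithm when searching `T` for
`S`), and `D'` has at most `(m(m+1)/2 + 1)(m+1)` states. -/
theorem reduced_BMH_daa_correct_and_small {A : Type*} [Fintype A] [DecidableEq A] [Inhabited A]
    (m : ℕ) (hm : 1 ≤ m) (S : List A) (hS : S.length = m)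
    (fR gR : List A → ℕ)
    (hfR : ∀ a : List A, a.length = m → fR (repSub S a) = fBMH S m a)
    (hgR : ∀ a : List A, a.length = m → gR (repSub S a) = gBMH S m a)
    (T : List A) :
    (daaRun (redStep (fun r σ => repSub S (r ++ [σ])) gR) (redEmit fR)
        ((repSub S S, m), 0) T).2
      = totalCost (fBMH S m) (gBMH S m) m T
    ∧ {t : List A | t <:+: S}.Finite
    ∧ ({t : List A | t <:+: S} ×ˢ Set.Iic m).ncard ≤ (m * (m + 1) / 2 + 1) * (m + 1) := by
  have h1 := loop m hm S hS fR gR hfR hgR T (T.length + 1) 0 0 0 m hm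
    (by omega) (by omega) (by omega)
  simp only [List.take_zero, List.append_nil, List.drop_zero, Nat.zero_add] at h1
  -- counting
  set P : Finset ((_ : ℕ) × ℕ) := (Finset.range (m + 1)).sigma (fun j => Finset.range j) with hP
  set φ : ((_ : ℕ) × ℕ) → List A := fun p => (S.take p.1).drop p.2 with hφ
  have hsub : {t : List A | t <:+: S} ⊆ insert [] (φ '' ↑P) := by
    intro t ht
    by_cases ht0 : t = []
    · exact ht0 ▸ Set.mem_insert _ _
    · obtain ⟨u, v, huv⟩ := ht
      have hlenS : u.length + t.length + v.length = S.length := by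
        rw [← huv]; simp; omega
      refine Set.mem_insert_iff.2 (Or.inr ⟨⟨u.length + t.length, u.length⟩, ?_, ?_⟩)
      · simp only [Finset.mem_coe, Finset.mem_sigma, Finset.mem_range, hP]
        refine ⟨?_, ?_⟩
        · rw [hS] at hlenS; omega
        · have := List.length_pos_iff.2 ht0
          omega
      · show (S.take (u.length + t.length)).drop u.length = t
        have hSeq : S = (u ++ t) ++ v := huv.symm
        rw [hSeq, show u.length + t.length = (u ++ t).length by simp,
          List.take_left, List.drop_left]
  have hfin : (insert [] (φ '' ↑P) : Set (List A)).Finite :=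
    (P.finite_toSet.image φ).insert []
  have hInfFin : {t : List A | t <:+: S}.Finite := hfin.subset hsub
  have hPcard : P.card = m * (m + 1) / 2 := by
    rw [hP, Finset.card_sigma]
    simp only [Finset.card_range]
    rw [Finset.sum_range_id, Nat.add_sub_cancel, Nat.mul_comm]
  have hIcard : {t : List A | t <:+: S}.ncard ≤ m * (m + 1) / 2 + 1 := by
    calc {t : List A | t <:+: S}.ncard ≤ (insert [] (φ '' ↑P) : Set (List A)).ncard :=
          Set.ncard_le_ncard hsub hfin
      _ ≤ (φ '' ↑P).ncard + 1 := Set.ncard_insert_le _ _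
      _ ≤ (↑P : Set ((_ : ℕ) × ℕ)).ncard + 1 :=
          Nat.add_le_add_right (Set.ncard_image_le P.finite_toSet) 1
      _ = m * (m + 1) / 2 + 1 := by rw [Set.ncard_coe_finset, hPcard]
  have hprod : ({t : List A | t <:+: S} ×ˢ Set.Iic m).ncard
      = {t : List A | t <:+: S}.ncard * (Set.Iic m).ncard := by
    rw [← Nat.card_coe_set_eq, ← Nat.card_coe_set_eq, ← Nat.card_coe_set_eq,
      Nat.card_congr (Equiv.Set.prod _ _), Nat.card_prod]
  have hIic : (Set.Iic m).ncard = m + 1 := by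
    rw [← Finset.coe_Iic, Set.ncard_coe_finset, Nat.card_Iic]
  refine ⟨?_, hInfFin, ?_⟩
  · rw [totalCost]
    exact h1
  · rw [hprod, hIic]
    exact Nat.mul_le_mul hIcard (le_refl (m + 1))
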